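/- In the semantics where states are functions f : A⁺ → {T,F} satisfying f(σaa) = f(σa) for all atoms a and strings σ ∈ A*, the axiom scheme (CPrp1): (x ◁ a ▷ y) ◁ a ▷ z = (x ◁ a ▷ x) ◁ a ▷ z is sound, i.e., both sides have the same reply and the same state transformation on every such state. -/

import Mathlib

inductive CE (A : Type) : Type
  | tt : CE A
  | ff : CE A
  | atom : A → CE A
  | cond : CE A → CE A → CE A → CE A

/-- Nonempty strings of atoms (A⁺). -/
def NEStr (A : Type) := {l : List A // l ≠ []}

/-- States: valuation functions f : A⁺ → {T,F}. -/
def StateF (A : Type) := NEStr A → Bool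

mutual
/-- The reply `t ! f` of a conditional expression in state `f`. -/
def reply {A : Type} : CE A → StateF A → Bool
  | .tt, _ => true
  | .ff, _ => false
  | .atom a, f => f ⟨[a], by simp⟩
  | .cond x y z, f => if reply y f then reply x (applyCE y f) else reply z (applyCE y f)

/-- The state transformation `t • f` of a conditional expression. -/
def applyCE {A : Type} : CE A → StateF A → StateF A
  | .tt, f => f
  | .ff, f => f
  | .atom a, f => fun σ => f ⟨a :: σ.1, by simp⟩
  | .cond x y z, f => if reply y f then applyCE x (applyCE y f) else applyCE z (applyCE y f)
end

/-- Repetition-proof states: f(σaa) = f(σa) for all atoms a and strings σ. -/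
def RPset (A : Type) : Set (StateF A) :=
  {f | ∀ (σ : List A) (a : A), f ⟨σ ++ [a, a], by simp⟩ = f ⟨σ ++ [a], by simp⟩}

/-- Soundness of (CPrp1) on repetition-proof states: both sides have the same
reply and the same state transformation. -/
theorem cprp1_sound (A : Type) (f : StateF A) (hf : f ∈ RPset A) (a : A) (x y z : CE A) :
    reply (.cond (.cond x (.atom a) y) (.atom a) z) f =
      reply (.cond (.cond x (.atom a) x) (.atom a) z) f ∧
    applyCE (.cond (.cond x (.atom a) y) (.atom a) z) f =
      applyCE (.cond (.cond x (.atom a) x) (.atom a) z) f := by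
  have key : reply (CE.atom a) (applyCE (CE.atom a) f) = reply (CE.atom a) f := by
    simpa [reply, applyCE] using hf [] a
  simp only [reply, applyCE, key]
  have h2 : f ⟨[a, a], by simp⟩ = f ⟨[a], by simp⟩ := hf [] a
  split_ifs <;> simp_all
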